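/- arXiv:2211.13208 — 4 statements merged into one kernel-verified Lean document; each statement's English description precedes it below -/
import Mathlib

section
/- Let {X_k}_{k=1}^n be a real-valued martingale difference sequence adapted to filtration {F_k} with |X_k| ≤ M almost surely, and let V = ∑_{k=1}^n E[X_k² | F_{k−1}]. Then for any t > 0, P( ∑_{k=1}^n X_k ≥ 2Mt/3 + √(2bt) and V ≤ b ) ≤ e^{−t}. -/
open MeasureTheory
section AuxFreedman
open Nat


noncomputable def expG (x : ℝ) : ℝ := ∑' n : ℕ, x ^ n / ((n + 2)! : ℝ)

lemma expG_summable (x : ℝ) : Summable (fun n : ℕ => x ^ n / ((n + 2)! : ℝ)) := by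
  refine Summable.of_norm_bounded (Real.summable_pow_div_factorial |x|) (fun n => ?_)
  rw [norm_div, norm_pow, Real.norm_eq_abs, Real.norm_eq_abs,
    abs_of_nonneg (by positivity : (0:ℝ) ≤ (((n+2)! : ℕ) : ℝ))]
  gcongr
  · omega

lemma exp_eq_expG (x : ℝ) : Real.exp x = 1 + x + x ^ 2 * expG x := by
  have h : Real.exp x = ∑' n : ℕ, x ^ n / n ! := by
    rw [Real.exp_eq_exp_ℝ, NormedSpace.exp_eq_tsum_div]
  have hs : Summable (fun n : ℕ => x ^ n / (n ! : ℝ)) := Real.summable_pow_div_factorial x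
  have h2 := hs.sum_add_tsum_nat_add 2
  have h3 : ∑' n : ℕ, x ^ (n + 2) / (((n + 2)! : ℕ) : ℝ) = x ^ 2 * expG x := by
    rw [expG, ← tsum_mul_left]
    congr 1 with n
    ring
  rw [h, ← h2, Finset.sum_range_succ, Finset.sum_range_succ, Finset.sum_range_zero]
  simp only [pow_zero, Nat.factorial_zero, pow_one, Nat.factorial_one, Nat.cast_one]
  rw [h3]
  ring

lemma expG_mono {x y : ℝ} (h : |x| ≤ y) : expG x ≤ expG y := by
  refine (expG_summable x).tsum_le_tsum (fun n => ?_) (expG_summable y)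
  have hxy : x ^ n ≤ y ^ n := by
    calc x ^ n ≤ |x ^ n| := le_abs_self _
    _ = |x| ^ n := abs_pow x n
    _ ≤ y ^ n := pow_le_pow_left₀ (abs_nonneg x) h n
  gcongr

lemma expG_nonneg {y : ℝ} (hy : 0 ≤ y) : 0 ≤ expG y :=
  tsum_nonneg (fun n => by positivity)

lemma fact_ge_geom (n : ℕ) : (2 * 3 ^ n : ℝ) ≤ ((n + 2)! : ℕ) := by
  induction n with
  | zero => norm_num [Nat.factorial]
  | succ k ih =>
    have h : (((k + 1 + 2)! : ℕ) : ℝ) = (k + 3) * ((k + 2)! : ℕ) := by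
      have : (k + 1 + 2)! = (k + 3) * (k + 2)! := by
        rw [show k + 1 + 2 = (k + 2) + 1 by ring, Nat.factorial_succ]
      rw [this]; push_cast; ring
    rw [h]
    have h3 : (0:ℝ) < 3 ^ k := by positivity
    have hkn : (0:ℝ) ≤ (k:ℝ) := Nat.cast_nonneg k
    calc (2 * 3 ^ (k+1) : ℝ) = 3 * (2 * 3 ^ k) := by ring
    _ ≤ 3 * (((k + 2)! : ℕ) : ℝ) := by linarith
    _ ≤ ((k:ℝ) + 3) * (((k + 2)! : ℕ) : ℝ) := by
        have hf : (0:ℝ) ≤ (((k + 2)! : ℕ) : ℝ) := by positivity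
        nlinarith

lemma expG_le_geom {u : ℝ} (hu : 0 ≤ u) (hu3 : u < 3) : expG u ≤ 1 / (2 * (1 - u / 3)) := by
  have hr0 : 0 ≤ u / 3 := by linarith
  have hr1 : u / 3 < 1 := by linarith
  have hsum : Summable (fun n : ℕ => (1/2 : ℝ) * (u/3) ^ n) :=
    (summable_geometric_of_lt_one hr0 hr1).mul_left _
  have hle : expG u ≤ ∑' n : ℕ, (1/2 : ℝ) * (u/3) ^ n := by
    refine (expG_summable u).tsum_le_tsum (fun n => ?_) hsum
    have h1 : (1/2 : ℝ) * (u/3) ^ n = u ^ n / (2 * 3 ^ n) := by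
      rw [div_pow]; ring
    rw [h1]
    apply div_le_div_of_nonneg_left (by positivity) (by positivity)
    exact fact_ge_geom n
  rw [tsum_mul_left, tsum_geometric_of_lt_one hr0 hr1] at hle
  refine hle.trans (le_of_eq ?_)
  have : (1 : ℝ) - u/3 > 0 := by linarith
  field_simp
lemma key_pointwise {l M x : ℝ} (hl : 0 ≤ l) (hx : |x| ≤ M) :
    Real.exp (l * x) ≤ 1 + l * x + l ^ 2 * expG (l * M) * x ^ 2 := by
  have hlx : |l * x| ≤ l * M := by
    rw [abs_mul, abs_of_nonneg hl]
    exact mul_le_mul_of_nonneg_left hx hl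
  have h1 := exp_eq_expG (l * x)
  have h2 : expG (l * x) ≤ expG (l * M) := expG_mono hlx
  have hx2 : x ^ 2 ≤ M ^ 2 := by
    have := sq_abs x
    nlinarith [abs_nonneg x]
  have hM0 : 0 ≤ l * M := le_trans (abs_nonneg _) hlx
  have hg0 : 0 ≤ expG (l * M) := expG_nonneg hM0
  rw [h1]
  have : (l * x) ^ 2 * expG (l * x) ≤ l ^ 2 * expG (l * M) * x ^ 2 := by
    calc (l * x) ^ 2 * expG (l * x) ≤ (l * x) ^ 2 * expG (l * M) := by
          apply mul_le_mul_of_nonneg_left h2 (by positivity)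
    _ = l ^ 2 * expG (l * M) * x ^ 2 := by ring
  linarith

lemma numeric {M b t : ℝ} (hM : 0 ≤ M) (hb : 0 < b) (ht : 0 < t) :
    ∃ l : ℝ, 0 < l ∧
      t ≤ l * (2*M*t/3 + Real.sqrt (2*b*t)) - (l^2 * expG (l*M)) * b := by
  set s := Real.sqrt (2*b*t) with hs_def
  clear_value s
  have hs0 : 0 < s := by rw [hs_def]; exact Real.sqrt_pos.mpr (by positivity)
  have hs2 : s^2 = 2*b*t := by rw [hs_def]; exact Real.sq_sqrt (by positivity)
  set a := 2*M*t/3 + s with ha_def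
  clear_value a
  have ha : 0 < a := by
    have : 0 ≤ 2*M*t/3 := by positivity
    linarith
  set d := b + M*a/3 with hd_def
  clear_value d
  have hd : 0 < d := by
    have : 0 ≤ M*a/3 := by positivity
    linarith
  refine ⟨a/d, by positivity, ?_⟩
  have key1 : (a/d)*M < 3 := by
    rw [div_mul_eq_mul_div, div_lt_iff₀ hd]
    nlinarith
  have key0 : 0 ≤ (a/d)*M := by positivity
  have hG : expG ((a/d)*M) ≤ 1/(2*(1-(a/d)*M/3)) := expG_le_geom key0 key1
  have h1m : 1 - (a/d)*M/3 = b/d := by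
    field_simp
    linear_combination 3*hd_def
  have hGd : expG ((a/d)*M) ≤ d/(2*b) := by
    rw [h1m] at hG
    refine hG.trans (le_of_eq ?_)
    rw [eq_div_iff (by positivity)]
    field_simp
  have hph : (a/d)^2 * expG ((a/d)*M) * b ≤ a^2/(2*d) := by
    have h0 : (0:ℝ) ≤ (a/d)^2 := sq_nonneg _
    have : (a/d)^2 * expG ((a/d)*M) * b ≤ (a/d)^2 * (d/(2*b)) * b :=
      mul_le_mul_of_nonneg_right (mul_le_mul_of_nonneg_left hGd h0) hb.le
    refine this.trans (le_of_eq ?_)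
    field_simp
  have ha2 : 2*t*d ≤ a^2 := by
    have h1 : 0 ≤ (2*M*t/3) * s := by positivity
    nlinarith
  have hla : (a/d) * a = a^2/d := by field_simp
  have ht2 : t ≤ a^2/(2*d) := by
    rw [le_div_iff₀ (by positivity)]
    nlinarith
  have hsplit : a^2/d - a^2/(2*d) = a^2/(2*d) := by
    field_simp
    ring
  linarith [hph, ht2]

end AuxFreedman

theorem stmt2 {Ω : Type*} {m : MeasurableSpace Ω} {μ : Measure Ω}
    [IsProbabilityMeasure μ]
    (ℱ : Filtration ℕ m) (X : ℕ → Ω → ℝ) (n : ℕ) (M b t : ℝ)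
    (hM : 0 ≤ M) (hb : 0 < b) (ht : 0 < t)
    (hadapted : StronglyAdapted ℱ X)
    (hmds : ∀ k, μ[X k | ℱ (k - 1)] =ᵐ[μ] 0)
    (hbdd : ∀ k, ∀ᵐ ω ∂μ, |X k ω| ≤ M) :
    μ {ω | 2 * M * t / 3 + Real.sqrt (2 * b * t) ≤ ∑ k ∈ Finset.Icc 1 n, X k ω ∧
        ∑ k ∈ Finset.Icc 1 n, (μ[fun ω' => (X k ω') ^ 2 | ℱ (k - 1)]) ω ≤ b} ≤
      ENNReal.ofReal (Real.exp (-t)) := by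
  obtain ⟨l, hl, hnum⟩ := numeric hM hb ht
  set W : ℕ → Ω → ℝ := fun k => μ[fun ω' => (X k ω') ^ 2 | ℱ (k - 1)] with hW_def
  set ph : ℝ := l ^ 2 * expG (l * M) with hph_def
  have hph0 : 0 ≤ ph := mul_nonneg (sq_nonneg l) (expG_nonneg (by positivity))
  -- basic measurability and integrability
  have hXm : ∀ k, StronglyMeasurable (X k) := fun k => (hadapted k).mono (ℱ.le k)
  have hXint : ∀ k, Integrable (X k) μ := fun k =>
    (integrable_const M).mono' (hXm k).aestronglyMeasurable
      ((hbdd k).mono fun ω h => by rwa [Real.norm_eq_abs])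
  have hX2int : ∀ k, Integrable (fun ω => (X k ω) ^ 2) μ := fun k =>
    (integrable_const (M ^ 2)).mono' ((hXm k).pow 2).aestronglyMeasurable
      ((hbdd k).mono fun ω h => by
        rw [Real.norm_eq_abs, abs_pow]
        exact pow_le_pow_left₀ (abs_nonneg _) h 2)
  have hWm : ∀ k, StronglyMeasurable (W k) := fun k =>
    stronglyMeasurable_condExp.mono (ℱ.le (k - 1))
  have hW0 : ∀ᵐ ω ∂μ, ∀ k, 0 ≤ W k ω :=
    ae_all_iff.mpr fun k => condExp_nonneg (ae_of_all μ fun ω => sq_nonneg _)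
  have hXbd : ∀ᵐ ω ∂μ, ∀ k, |X k ω| ≤ M := ae_all_iff.mpr hbdd
  -- the exponential supermartingale
  set Z : ℕ → Ω → ℝ := fun k ω =>
    Real.exp (l * ∑ j ∈ Finset.Icc 1 k, X j ω - ph * ∑ j ∈ Finset.Icc 1 k, W j ω) with hZ_def
  have hZpos : ∀ k ω, 0 < Z k ω := fun k ω => Real.exp_pos _
  have hZm : ∀ k, StronglyMeasurable (Z k) := by
    intro k
    apply Continuous.comp_stronglyMeasurable Real.continuous_exp
    apply StronglyMeasurable.sub
    · exact (Finset.stronglyMeasurable_fun_sum _ fun j _ => hXm j).const_mul l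
    · exact (Finset.stronglyMeasurable_fun_sum _ fun j _ => hWm j).const_mul ph
  have hZbd : ∀ k, ∀ᵐ ω ∂μ, ‖Z k ω‖ ≤ Real.exp (l * (k * M)) := by
    intro k
    filter_upwards [hW0, hXbd] with ω hW0ω hXbdω
    rw [Real.norm_eq_abs, abs_of_pos (hZpos k ω), Real.exp_le_exp]
    have h1 : ∑ j ∈ Finset.Icc 1 k, X j ω ≤ k * M := by
      calc ∑ j ∈ Finset.Icc 1 k, X j ω ≤ ∑ j ∈ Finset.Icc 1 k, M :=
            Finset.sum_le_sum fun j _ => (abs_le.mp (hXbdω j)).2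
      _ = k * M := by rw [Finset.sum_const, Nat.card_Icc]; simp
    have h2 : 0 ≤ ∑ j ∈ Finset.Icc 1 k, W j ω :=
      Finset.sum_nonneg fun j _ => hW0ω j
    have h3 : l * ∑ j ∈ Finset.Icc 1 k, X j ω ≤ l * (k * M) :=
      mul_le_mul_of_nonneg_left h1 hl.le
    nlinarith
  have hZint : ∀ k, Integrable (Z k) μ := fun k =>
    (integrable_const (Real.exp (l * (k * M)))).mono' (hZm k).aestronglyMeasurable (hZbd k)
  -- supermartingale property: ∫ Z k ≤ 1
  have hind : ∀ k, ∫ ω, Z k ω ∂μ ≤ 1 := by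
    intro k
    induction k with
    | zero =>
      have : Z 0 = fun _ => 1 := by
        funext ω
        simp [hZ_def]
      rw [this]
      simp
    | succ k ih =>
      have hG : ℱ k ≤ m := ℱ.le k
      -- split Z (k+1)
      set f : Ω → ℝ := fun ω => Z k ω * Real.exp (-(ph * W (k + 1) ω)) with hf_def
      set g : Ω → ℝ := fun ω => Real.exp (l * X (k + 1) ω) with hg_def
      have hsplit : Z (k + 1) = f * g := by
        funext ω
        simp only [hZ_def, hf_def, hg_def, Pi.mul_apply]
        rw [Finset.sum_Icc_succ_top (by omega : 1 ≤ k + 1),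
          Finset.sum_Icc_succ_top (by omega : 1 ≤ k + 1), ← Real.exp_add, ← Real.exp_add]
        ring_nf
      have hWsm : StronglyMeasurable[ℱ k] (W (k + 1)) := stronglyMeasurable_condExp
      have hfsm : StronglyMeasurable[ℱ k] f := by
        apply StronglyMeasurable.mul
        · apply Continuous.comp_stronglyMeasurable Real.continuous_exp
          apply StronglyMeasurable.sub
          · refine (Finset.stronglyMeasurable_fun_sum _ fun j hj => ?_).const_mul l
            exact (hadapted j).mono (ℱ.mono (Finset.mem_Icc.mp hj).2)
          · refine (Finset.stronglyMeasurable_fun_sum _ fun j hj => ?_).const_mul ph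
            refine stronglyMeasurable_condExp.mono (ℱ.mono ?_)
            have hjk := (Finset.mem_Icc.mp hj).2
            omega
        · exact Continuous.comp_stronglyMeasurable Real.continuous_exp
            (hWsm.const_mul ph).neg
      have hgint : Integrable g μ := by
        refine (integrable_const (Real.exp (l * M))).mono'
          ((Continuous.comp_stronglyMeasurable Real.continuous_exp
            ((hXm (k + 1)).const_mul l)).aestronglyMeasurable) ?_
        filter_upwards [hbdd (k + 1)] with ω hω
        rw [hg_def, Real.norm_eq_abs, Real.abs_exp, Real.exp_le_exp]
        exact mul_le_mul_of_nonneg_left (abs_le.mp hω).2 hl.le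
      have hfgint : Integrable (f * g) μ := hsplit ▸ hZint (k + 1)
      have hpull : μ[f * g|ℱ k] =ᵐ[μ] f * μ[g|ℱ k] :=
        condExp_mul_of_stronglyMeasurable_left hfsm hfgint hgint
      -- bound the conditional expectation of g
      have hptw : ∀ᵐ ω ∂μ, g ω ≤ 1 + l * X (k + 1) ω + ph * (X (k + 1) ω) ^ 2 := by
        filter_upwards [hbdd (k + 1)] with ω hω
        simpa [hph_def, mul_comm, mul_assoc, mul_left_comm] using key_pointwise hl.le hω
      have hhint : Integrable (fun ω => 1 + l * X (k + 1) ω + ph * (X (k + 1) ω) ^ 2) μ :=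
        ((integrable_const (1 : ℝ)).add ((hXint (k + 1)).const_mul l)).add
          ((hX2int (k + 1)).const_mul ph)
      have hmono := condExp_mono (m := ℱ k) hgint hhint hptw
      have hlin : μ[fun ω => 1 + l * X (k + 1) ω + ph * (X (k + 1) ω) ^ 2|ℱ k]
          =ᵐ[μ] fun ω => 1 + ph * W (k + 1) ω := by
        have e1 : (fun ω => 1 + l * X (k + 1) ω + ph * (X (k + 1) ω) ^ 2)
            = (fun ω => 1 + l * X (k + 1) ω) + fun ω => ph * (X (k + 1) ω) ^ 2 := rfl
        have e2 : (fun ω => 1 + l * X (k + 1) ω)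
            = (fun _ => (1 : ℝ)) + fun ω => l * X (k + 1) ω := rfl
        calc μ[fun ω => 1 + l * X (k + 1) ω + ph * (X (k + 1) ω) ^ 2|ℱ k]
            =ᵐ[μ] μ[fun ω => 1 + l * X (k + 1) ω|ℱ k]
              + μ[fun ω => ph * (X (k + 1) ω) ^ 2|ℱ k] := by
              rw [e1]
              exact condExp_add ((integrable_const (1 : ℝ)).add ((hXint (k + 1)).const_mul l))
                ((hX2int (k + 1)).const_mul ph) _
        _ =ᵐ[μ] fun ω => 1 + ph * W (k + 1) ω := by
              have hc1 : μ[fun ω => 1 + l * X (k + 1) ω|ℱ k] =ᵐ[μ] fun _ => 1 := by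
                calc μ[fun ω => 1 + l * X (k + 1) ω|ℱ k]
                    =ᵐ[μ] μ[(fun _ => (1 : ℝ))|ℱ k] + μ[fun ω => l * X (k + 1) ω|ℱ k] := by
                      rw [e2]
                      exact condExp_add (integrable_const 1) ((hXint (k + 1)).const_mul l) _
                _ =ᵐ[μ] fun _ => 1 := by
                      have hx0 : μ[fun ω => l * X (k + 1) ω|ℱ k] =ᵐ[μ] 0 := by
                        have := condExp_smul (μ := μ) (m := ℱ k) l (X (k + 1))
                        refine this.trans ?_
                        have h0 : μ[X (k + 1)|ℱ k] =ᵐ[μ] 0 := hmds (k + 1)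
                        filter_upwards [h0] with ω hω
                        simp [hω]
                      have hcc : μ[(fun _ => (1 : ℝ))|ℱ k] = fun _ => 1 :=
                        condExp_const hG 1
                      filter_upwards [hx0] with ω h1
                      simp [hcc, h1]
              have hc2 : μ[fun ω => ph * (X (k + 1) ω) ^ 2|ℱ k]
                  =ᵐ[μ] fun ω => ph * W (k + 1) ω := by
                have := condExp_smul (μ := μ) (m := ℱ k) ph (fun ω => (X (k + 1) ω) ^ 2)
                refine this.trans ?_
                filter_upwards with ω
                simp [hW_def]
              filter_upwards [hc1, hc2] with ω h1 h2
              simp only [Pi.add_apply, h1, h2]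
      -- conclude the supermartingale step
      have hstep : μ[Z (k + 1)|ℱ k] ≤ᵐ[μ] Z k := by
        rw [hsplit]
        refine hpull.le.trans ?_
        filter_upwards [hmono, hlin, condExp_nonneg (μ := μ) (m := ℱ k)
          (ae_of_all μ fun ω => (Real.exp_pos (l * X (k + 1) ω)).le)] with ω h1 h2 h3
        have hf0 : 0 ≤ f ω := le_of_lt (by positivity)
        have h4 : (μ[g|ℱ k]) ω ≤ Real.exp (ph * W (k + 1) ω) := by
          refine (h1.trans_eq h2).trans ?_
          have := Real.add_one_le_exp (ph * W (k + 1) ω)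
          linarith
        calc (f * μ[g|ℱ k]) ω = f ω * (μ[g|ℱ k]) ω := rfl
        _ ≤ f ω * Real.exp (ph * W (k + 1) ω) := mul_le_mul_of_nonneg_left h4 hf0
        _ = Z k ω := by
            simp only [hf_def]
            rw [mul_assoc, ← Real.exp_add]
            simp
      calc ∫ ω, Z (k + 1) ω ∂μ = ∫ ω, (μ[Z (k + 1)|ℱ k]) ω ∂μ :=
            (integral_condExp hG).symm
      _ ≤ ∫ ω, Z k ω ∂μ := integral_mono_ae integrable_condExp (hZint k) hstep
      _ ≤ 1 := ih
  -- Markov / Chernoff step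
  set E := {ω | 2 * M * t / 3 + Real.sqrt (2 * b * t) ≤ ∑ k ∈ Finset.Icc 1 n, X k ω ∧
      ∑ k ∈ Finset.Icc 1 n, W k ω ≤ b} with hE_def
  have hsub : E ⊆ {ω | ENNReal.ofReal (Real.exp t) ≤ ENNReal.ofReal (Z n ω)} := by
    intro ω hω
    obtain ⟨h1, h2⟩ := hω
    have hZn : Real.exp t ≤ Z n ω := by
      rw [hZ_def, Real.exp_le_exp]  -- exp t ≤ exp (...)
      have hla : l * (2 * M * t / 3 + Real.sqrt (2 * b * t)) ≤ l * ∑ j ∈ Finset.Icc 1 n, X j ω :=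
        mul_le_mul_of_nonneg_left h1 hl.le
      have hphb : ph * ∑ j ∈ Finset.Icc 1 n, W j ω ≤ ph * b := mul_le_mul_of_nonneg_left h2 hph0
      have := hnum
      nlinarith
    exact ENNReal.ofReal_le_ofReal hZn
  have hmarkov := mul_meas_ge_le_lintegral₀ (μ := μ)
    (((hZm n).measurable.ennreal_ofReal).aemeasurable) (ENNReal.ofReal (Real.exp t))
  have hlint : ∫⁻ ω, ENNReal.ofReal (Z n ω) ∂μ = ENNReal.ofReal (∫ ω, Z n ω ∂μ) :=
    (ofReal_integral_eq_lintegral_ofReal (hZint n)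
      (ae_of_all μ fun ω => (hZpos n ω).le)).symm
  have hle1 : ∫⁻ ω, ENNReal.ofReal (Z n ω) ∂μ ≤ 1 := by
    rw [hlint]
    calc ENNReal.ofReal (∫ ω, Z n ω ∂μ) ≤ ENNReal.ofReal 1 :=
          ENNReal.ofReal_le_ofReal (hind n)
    _ = 1 := ENNReal.ofReal_one
  have hmeas_le : μ E ≤ μ {ω | ENNReal.ofReal (Real.exp t) ≤ ENNReal.ofReal (Z n ω)} :=
    measure_mono hsub
  have hprod : ENNReal.ofReal (Real.exp t) *
      μ {ω | ENNReal.ofReal (Real.exp t) ≤ ENNReal.ofReal (Z n ω)} ≤ 1 :=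
    hmarkov.trans hle1
  have hfinal : μ {ω | ENNReal.ofReal (Real.exp t) ≤ ENNReal.ofReal (Z n ω)} ≤
      ENNReal.ofReal (Real.exp (-t)) := by
    have hc0 : ENNReal.ofReal (Real.exp t) ≠ 0 := by
      simp [Real.exp_pos]
    have hct : ENNReal.ofReal (Real.exp t) ≠ ⊤ := ENNReal.ofReal_ne_top
    rw [Real.exp_neg, ENNReal.ofReal_inv_of_pos (Real.exp_pos t)]
    calc μ {ω | ENNReal.ofReal (Real.exp t) ≤ ENNReal.ofReal (Z n ω)}
        ≤ 1 / ENNReal.ofReal (Real.exp t) := by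
          rw [ENNReal.le_div_iff_mul_le (Or.inl hc0) (Or.inl hct)]
          rw [mul_comm]
          exact hprod
    _ = (ENNReal.ofReal (Real.exp t))⁻¹ := one_div _
  exact le_trans hmeas_le hfinal
end

section
/- Let Σ = λI + ∑_{t=1}^k φ_t φ_tᵀ with λ > 0 and ‖φ_t‖₂ ≤ 1, and let ŵ = Σ^{−1} ∑_{t=1}^k φ_t y_t where |y_t| ≤ B for all t. Then ‖ŵ‖₂ ≤ B·√(dk/λ). -/
open Matrix

private lemma vmv_mulVec {n : Type*} [Fintype n] (a b x : n → ℝ) :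
    vecMulVec a b *ᵥ x = (b ⬝ᵥ x) • a := by
  ext i
  simp [vecMulVec_apply, mulVec, dotProduct, Finset.mul_sum, mul_assoc, mul_comm, mul_left_comm]

private lemma trace_mul_vmv {n : Type*} [Fintype n] (D : Matrix n n ℝ) (a : n → ℝ) :
    (D * vecMulVec a a).trace = a ⬝ᵥ (D *ᵥ a) := by
  simp only [Matrix.trace, Matrix.diag_apply, Matrix.mul_apply, vecMulVec_apply,
    dotProduct, mulVec, Finset.mul_sum]
  refine Finset.sum_congr rfl fun j _ => Finset.sum_congr rfl fun i _ => by ring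

private lemma sum_mulVec' {m n : Type*} [Fintype m] [Fintype n] (s : Finset ℕ)
    (A : ℕ → Matrix m n ℝ) (u : n → ℝ) :
    (∑ t ∈ s, A t) *ᵥ u = ∑ t ∈ s, A t *ᵥ u := by
  ext i
  simp only [mulVec, dotProduct, Finset.sum_apply, Finset.sum_mul, Matrix.sum_apply]
  rw [Finset.sum_comm]

private lemma mulVec_sum' {m n : Type*} [Fintype m] [Fintype n] (s : Finset ℕ)
    (A : Matrix m n ℝ) (v : ℕ → n → ℝ) :
    A *ᵥ (∑ t ∈ s, v t) = ∑ t ∈ s, A *ᵥ v t := by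
  ext i
  simp only [mulVec, dotProduct, Finset.sum_apply, Finset.mul_sum]
  rw [Finset.sum_comm]

private lemma dotProduct_sum' {n : Type*} [Fintype n] (s : Finset ℕ)
    (u : n → ℝ) (v : ℕ → n → ℝ) :
    u ⬝ᵥ (∑ t ∈ s, v t) = ∑ t ∈ s, u ⬝ᵥ v t := by
  simp only [dotProduct, Finset.sum_apply, Finset.mul_sum]
  rw [Finset.sum_comm]

private lemma sqrt_dot_sum_le {n : Type*} [Fintype n] (s : Finset ℕ) (v : ℕ → n → ℝ) :
    Real.sqrt ((∑ t ∈ s, v t) ⬝ᵥ (∑ t ∈ s, v t)) ≤ ∑ t ∈ s, Real.sqrt (v t ⬝ᵥ v t) := by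
  have key : ∀ x : n → ℝ, Real.sqrt (x ⬝ᵥ x) = ‖(WithLp.equiv 2 (n → ℝ)).symm x‖ := by
    intro x
    rw [EuclideanSpace.norm_eq]
    congr 1
    simp [dotProduct, Real.norm_eq_abs, sq_abs, sq]
  simp_rw [key]
  have h : (WithLp.equiv 2 (n → ℝ)).symm (∑ t ∈ s, v t)
      = ∑ t ∈ s, (WithLp.equiv 2 (n → ℝ)).symm (v t) :=
    by exact WithLp.toLp_sum (p := 2) (s := s) (f := v)
  rw [h]
  exact norm_sum_le s _

private lemma sqrt_dot_smul {n : Type*} [Fintype n] (c : ℝ) (x : n → ℝ) :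
    Real.sqrt ((c • x) ⬝ᵥ (c • x)) = |c| * Real.sqrt (x ⬝ᵥ x) := by
  have : (c • x) ⬝ᵥ (c • x) = c ^ 2 * (x ⬝ᵥ x) := by
    rw [smul_dotProduct, dotProduct_smul, smul_eq_mul, smul_eq_mul]; ring
  rw [this, Real.sqrt_mul (sq_nonneg c), Real.sqrt_sq_eq_abs]

theorem stmt5 (d k : ℕ) (φ : ℕ → Fin d → ℝ) (y : ℕ → ℝ) (lam B : ℝ)
    (hlam : 0 < lam) (hB : 0 ≤ B)
    (hφ : ∀ t, Real.sqrt (φ t ⬝ᵥ φ t) ≤ 1)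
    (hy : ∀ t, |y t| ≤ B)
    (S : Matrix (Fin d) (Fin d) ℝ)
    (hS : S = lam • 1 + ∑ t ∈ Finset.range k, vecMulVec (φ t) (φ t))
    (w : Fin d → ℝ) (hw : w = S⁻¹ *ᵥ ∑ t ∈ Finset.range k, y t • φ t) :
    Real.sqrt (w ⬝ᵥ w) ≤ B * Real.sqrt (d * k / lam) := by
  -- mulVec formula
  have hmv : ∀ u : Fin d → ℝ, S *ᵥ u = lam • u + ∑ t ∈ Finset.range k, (φ t ⬝ᵥ u) • φ t := by
    intro u
    rw [hS, Matrix.add_mulVec, Matrix.smul_mulVec, Matrix.one_mulVec]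
    congr 1
    rw [sum_mulVec']
    exact Finset.sum_congr rfl fun t _ => vmv_mulVec _ _ _
  have hquad : ∀ u : Fin d → ℝ,
      u ⬝ᵥ (S *ᵥ u) = lam * (u ⬝ᵥ u) + ∑ t ∈ Finset.range k, (φ t ⬝ᵥ u) ^ 2 := by
    intro u
    rw [hmv, dotProduct_add, dotProduct_smul, smul_eq_mul, dotProduct_sum']
    congr 1
    exact Finset.sum_congr rfl fun t _ => by
      rw [dotProduct_smul, smul_eq_mul, dotProduct_comm, sq]
  have hdotnn : ∀ x : Fin d → ℝ, 0 ≤ x ⬝ᵥ x := fun x =>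
    Finset.sum_nonneg fun i _ => mul_self_nonneg _
  -- positive definiteness
  have hherm : S.IsHermitian := by
    rw [hS]
    show _ᴴ = _
    rw [Matrix.conjTranspose_add, Matrix.conjTranspose_smul, Matrix.conjTranspose_sum]
    congr 1
    · simp
    · refine Finset.sum_congr rfl fun t _ => ?_
      ext i j
      simp [Matrix.conjTranspose_apply, vecMulVec_apply, mul_comm]
  have hPD : S.PosDef := by
    refine Matrix.PosDef.of_dotProduct_mulVec_pos hherm fun x hx => ?_
    have hsx : star x = x := by
      funext i; simp
    rw [hsx, hquad x]
    have h1 : 0 < lam * (x ⬝ᵥ x) := by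
      apply mul_pos hlam
      rcases lt_or_eq_of_le (hdotnn x) with h | h
      · exact h
      · exact absurd (dotProduct_self_eq_zero.mp h.symm) hx
    have h2 : 0 ≤ ∑ t ∈ Finset.range k, (φ t ⬝ᵥ x) ^ 2 :=
      Finset.sum_nonneg fun t _ => sq_nonneg _
    linarith
  have hdet : IsUnit S.det := isUnit_iff_ne_zero.mpr hPD.det_pos.ne'
  have hinvS : S⁻¹ * S = 1 := Matrix.nonsing_inv_mul S hdet
  have hSinv : S * S⁻¹ = 1 := Matrix.mul_nonsing_inv S hdet
  have hinvPSD : S⁻¹.PosSemidef := hPD.posSemidef.inv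
  -- a t := φ t ⬝ᵥ (S⁻¹ *ᵥ φ t)
  have hann : ∀ t, 0 ≤ φ t ⬝ᵥ (S⁻¹ *ᵥ φ t) := by
    intro t
    have := hinvPSD.dotProduct_mulVec_nonneg (φ t)
    rwa [show star (φ t) = φ t from funext fun i => by simp] at this
  -- trace identity : elliptical potential
  have htrnn : 0 ≤ S⁻¹.trace := by
    apply Finset.sum_nonneg
    intro i _
    have := hinvPSD.dotProduct_mulVec_nonneg (Pi.single i 1)
    rwa [show star (Pi.single i 1) = (Pi.single i 1 : Fin d → ℝ) from funext fun j => by simp,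
      show (Pi.single i 1 : Fin d → ℝ) ⬝ᵥ (S⁻¹ *ᵥ Pi.single i 1) = S⁻¹ i i by
        simp [dotProduct, mulVec, Pi.single_apply, Finset.sum_ite_eq, Finset.sum_ite_eq']] at this
  have hsum_a : ∑ t ∈ Finset.range k, φ t ⬝ᵥ (S⁻¹ *ᵥ φ t) ≤ (d : ℝ) := by
    have h1 : (S⁻¹ * S).trace = (d : ℝ) := by
      rw [hinvS, Matrix.trace_one]; simp
    have h2 : (S⁻¹ * S).trace
        = lam * S⁻¹.trace + ∑ t ∈ Finset.range k, φ t ⬝ᵥ (S⁻¹ *ᵥ φ t) := by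
      rw [congrArg (fun A => S⁻¹ * A) hS]
      rw [mul_add, Matrix.trace_add, Finset.mul_sum, Matrix.trace_sum]
      congr 1
      · rw [mul_smul_comm, mul_one, Matrix.trace_smul, smul_eq_mul]
      · exact Finset.sum_congr rfl fun t _ => trace_mul_vmv _ _
    nlinarith [mul_nonneg hlam.le htrnn]
  -- per-term norm bound
  have hterm : ∀ t, (S⁻¹ *ᵥ φ t) ⬝ᵥ (S⁻¹ *ᵥ φ t) ≤ (φ t ⬝ᵥ (S⁻¹ *ᵥ φ t)) / lam := by
    intro t
    set u := S⁻¹ *ᵥ φ t with hu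
    have h1 : S *ᵥ u = φ t := by
      rw [hu, Matrix.mulVec_mulVec, hSinv, Matrix.one_mulVec]
    have h2 : φ t ⬝ᵥ u = u ⬝ᵥ (S *ᵥ u) := by
      conv_lhs => rw [← h1]
      exact dotProduct_comm _ _
    rw [le_div_iff₀ hlam, h2, hquad u]
    have h3 : 0 ≤ ∑ s ∈ Finset.range k, (φ s ⬝ᵥ u) ^ 2 :=
      Finset.sum_nonneg fun s _ => sq_nonneg _
    nlinarith
  -- decompose w
  have hwsum : w = ∑ t ∈ Finset.range k, y t • (S⁻¹ *ᵥ φ t) := by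
    rw [hw, mulVec_sum']
    exact Finset.sum_congr rfl fun t _ => Matrix.mulVec_smul _ _ _
  -- main chain
  have step1 : Real.sqrt (w ⬝ᵥ w)
      ≤ ∑ t ∈ Finset.range k, |y t| * Real.sqrt ((S⁻¹ *ᵥ φ t) ⬝ᵥ (S⁻¹ *ᵥ φ t)) := by
    rw [hwsum]
    calc _ ≤ ∑ t ∈ Finset.range k,
        Real.sqrt ((y t • (S⁻¹ *ᵥ φ t)) ⬝ᵥ (y t • (S⁻¹ *ᵥ φ t))) :=
          sqrt_dot_sum_le _ _
      _ = _ := Finset.sum_congr rfl fun t _ => sqrt_dot_smul _ _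
  have step2 : ∑ t ∈ Finset.range k, |y t| * Real.sqrt ((S⁻¹ *ᵥ φ t) ⬝ᵥ (S⁻¹ *ᵥ φ t))
      ≤ B * ∑ t ∈ Finset.range k, Real.sqrt ((φ t ⬝ᵥ (S⁻¹ *ᵥ φ t)) / lam) := by
    rw [Finset.mul_sum]
    refine Finset.sum_le_sum fun t _ => ?_
    exact mul_le_mul (hy t) (Real.sqrt_le_sqrt (hterm t)) (Real.sqrt_nonneg _) hB
  have step3 : ∑ t ∈ Finset.range k, Real.sqrt ((φ t ⬝ᵥ (S⁻¹ *ᵥ φ t)) / lam)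
      ≤ Real.sqrt (d * k / lam) := by
    rw [Real.le_sqrt (Finset.sum_nonneg fun t _ => Real.sqrt_nonneg _) (by positivity)]
    calc (∑ t ∈ Finset.range k, Real.sqrt ((φ t ⬝ᵥ (S⁻¹ *ᵥ φ t)) / lam)) ^ 2
        ≤ (Finset.range k).card *
          ∑ t ∈ Finset.range k, Real.sqrt ((φ t ⬝ᵥ (S⁻¹ *ᵥ φ t)) / lam) ^ 2 :=
          sq_sum_le_card_mul_sum_sq
      _ = k * ∑ t ∈ Finset.range k, (φ t ⬝ᵥ (S⁻¹ *ᵥ φ t)) / lam := by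
          rw [Finset.card_range]
          congr 1
          exact Finset.sum_congr rfl fun t _ =>
            Real.sq_sqrt (div_nonneg (hann t) hlam.le)
      _ = k * ((∑ t ∈ Finset.range k, φ t ⬝ᵥ (S⁻¹ *ᵥ φ t)) / lam) := by
          rw [← Finset.sum_div]
      _ ≤ k * ((d : ℝ) / lam) := by
          exact mul_le_mul_of_nonneg_left
            (div_le_div_of_nonneg_right hsum_a hlam.le) (Nat.cast_nonneg k)
      _ = (d : ℝ) * k / lam := by ring
  calc Real.sqrt (w ⬝ᵥ w) ≤ _ := step1
    _ ≤ _ := step2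
    _ ≤ B * Real.sqrt (d * k / lam) := mul_le_mul_of_nonneg_left step3 hB
end

section
/- Consider a finite-horizon MDP with horizon H, optimal value functions V*_h and Q*_h, and gap Δ_h(s,a) = V*_h(s) − Q*_h(s,a). For any policy π and any initial state s₁: V*_1(s₁) − V^π_1(s₁) = E_π[ ∑_{h=1}^H Δ_h(s_h, a_h) | s₁ ], where the expectation is over the trajectory (s₁,a₁,…,s_H,a_H) generated by π. -/
/-- Marginal state-visitation distribution of a (stochastic, time-inhomogeneous)
policy `π` in an MDP with transition kernel `P`, started from initial
distribution `d1`.  `occ P π d1 h s` is the probability of being in state `s`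
at step `h` (0-indexed). -/
noncomputable def occ {S A : Type*} [Fintype S] [Fintype A]
    (P : ℕ → S → A → S → ℝ) (π : ℕ → S → A → ℝ) (d1 : S → ℝ) : ℕ → S → ℝ
  | 0 => d1
  | n + 1 => fun s' => ∑ s, ∑ a, occ P π d1 n s * π n s a * P n s a s'

/-- Telescoping helper. -/
lemma telescope (f g : ℕ → ℝ) : ∀ H : ℕ, (∀ h, h < H → f h = g h + f (h+1)) →
    f 0 = (∑ h ∈ Finset.range H, g h) + f H := by
  intro H
  induction H with
  | zero => simp
  | succ n ih =>
    intro hstep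
    rw [Finset.sum_range_succ]
    have h1 := ih (fun h hh => hstep h (Nat.lt_succ_of_lt hh))
    rw [h1, hstep n (Nat.lt_succ_self n)]
    ring

theorem stmt10 {S A : Type*} [Fintype S] [Fintype A] [DecidableEq S]
    (H : ℕ) (P : ℕ → S → A → S → ℝ) (r : ℕ → S → A → ℝ) (π : ℕ → S → A → ℝ)
    (Vstar Vpi : ℕ → S → ℝ) (Qstar Qpi : ℕ → S → A → ℝ)
    (hPpos : ∀ h s a s', 0 ≤ P h s a s')
    (hPsum : ∀ h s a, ∑ s', P h s a s' = 1)
    (hπpos : ∀ h s a, 0 ≤ π h s a)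
    (hπsum : ∀ h s, ∑ a, π h s a = 1)
    (hQpi : ∀ h, h < H → ∀ s a, Qpi h s a = r h s a + ∑ s', P h s a s' * Vpi (h + 1) s')
    (hVpi : ∀ h, h < H → ∀ s, Vpi h s = ∑ a, π h s a * Qpi h s a)
    (hQstar : ∀ h, h < H → ∀ s a, Qstar h s a = r h s a + ∑ s', P h s a s' * Vstar (h + 1) s')
    (hVpiH : ∀ s, Vpi H s = 0) (hVstarH : ∀ s, Vstar H s = 0)
    (s₁ : S) :
    Vstar 0 s₁ - Vpi 0 s₁ =
      ∑ h ∈ Finset.range H, ∑ s, ∑ a,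
        occ P π (fun s => if s = s₁ then 1 else 0) h s * π h s a *
          (Vstar h s - Qstar h s a) := by
  set d1 : S → ℝ := fun s => if s = s₁ then 1 else 0 with hd1
  set f : ℕ → ℝ := fun h => ∑ s, occ P π d1 h s * (Vstar h s - Vpi h s) with hf
  set g : ℕ → ℝ := fun h => ∑ s, ∑ a, occ P π d1 h s * π h s a * (Vstar h s - Qstar h s a)
    with hg
  have step : ∀ h, h < H → f h = g h + f (h+1) := by
    intro h hh
    have hfh1 : f (h+1) = ∑ s, ∑ a, ∑ s',
        occ P π d1 h s * π h s a * P h s a s' * (Vstar (h+1) s' - Vpi (h+1) s') := by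
      simp only [hf, occ, Finset.sum_mul]
      rw [Finset.sum_comm]
      refine Finset.sum_congr rfl fun s _ => ?_
      rw [Finset.sum_comm]
    rw [hfh1, hf, hg]
    simp only
    rw [← Finset.sum_add_distrib]
    refine Finset.sum_congr rfl fun s _ => ?_
    rw [hVpi h hh s]
    have hVs : ∑ a, π h s a * (Vstar h s - Qpi h s a)
        = Vstar h s - ∑ a, π h s a * Qpi h s a := by
      simp only [mul_sub]
      rw [Finset.sum_sub_distrib, ← Finset.sum_mul, hπsum, one_mul]
    calc occ P π d1 h s * (Vstar h s - ∑ a, π h s a * Qpi h s a)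
        = ∑ a, occ P π d1 h s * π h s a * (Vstar h s - Qpi h s a) := by
          rw [← hVs, Finset.mul_sum]
          refine Finset.sum_congr rfl fun a _ => ?_
          ring
      _ = ∑ a, (occ P π d1 h s * π h s a * (Vstar h s - Qstar h s a)
            + ∑ s', occ P π d1 h s * π h s a * P h s a s' * (Vstar (h+1) s' - Vpi (h+1) s')) := by
          refine Finset.sum_congr rfl fun a _ => ?_
          rw [hQpi h hh s a, hQstar h hh s a]
          have : ∑ s', occ P π d1 h s * π h s a * P h s a s' * (Vstar (h+1) s' - Vpi (h+1) s')
              = occ P π d1 h s * π h s a *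
                ((∑ s', P h s a s' * Vstar (h+1) s') - ∑ s', P h s a s' * Vpi (h+1) s') := by
            rw [← Finset.sum_sub_distrib, Finset.mul_sum]
            refine Finset.sum_congr rfl fun s' _ => ?_
            ring
          rw [this]
          ring
      _ = _ := by rw [Finset.sum_add_distrib]
  have hfin := telescope f g H step
  have hf0 : f 0 = Vstar 0 s₁ - Vpi 0 s₁ := by
    simp only [hf, occ, hd1]
    rw [Finset.sum_eq_single s₁] <;> simp (config := {contextual := true})
  have hfH : f H = 0 := by
    simp [hf, hVpiH, hVstarH]
  rw [← hf0, hfin, hfH, add_zero, hg]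
end

section
/- Let T be a monotone operator mapping bounded functions S×A → R (the Bellman operator T_h V = r_h + P_h V with r_h ∈ [0,1] and V ∈ [0, H−h]), and define Q̄(s,a) = T̂V(s,a) − b(s,a), Q̂(s,a) = max(min(Q̄(s,a), H−h+1), 0), where T̂ is any function with |TV(s,a) − T̂V(s,a)| ≤ b(s,a) pointwise and b ≥ 0. Then the Bellman error ζ(s,a) := TV(s,a) − Q̂(s,a) satisfies 0 ≤ ζ(s,a) ≤ 2·b(s,a) for all (s,a). -/
theorem stmt16 {S A : Type*} (H h : ℝ) (t that b : S → A → ℝ)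
    (ht0 : ∀ s a, 0 ≤ t s a) (ht1 : ∀ s a, t s a ≤ H - h + 1)
    (hb : ∀ s a, 0 ≤ b s a)
    (happrox : ∀ s a, |t s a - that s a| ≤ b s a) :
    ∀ s a, 0 ≤ t s a - max (min (that s a - b s a) (H - h + 1)) 0 ∧
      t s a - max (min (that s a - b s a) (H - h + 1)) 0 ≤ 2 * b s a := by
  intro s a
  obtain ⟨h1, h2⟩ := abs_le.mp (happrox s a)
  have h3 := ht0 s a; have h4 := ht1 s a; have h5 := hb s a
  rcases le_total (that s a - b s a) (H - h + 1) with hc | hc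
  · rw [min_eq_left hc]
    rcases le_total (that s a - b s a) 0 with hd | hd
    · rw [max_eq_right hd]; constructor <;> linarith
    · rw [max_eq_left hd]; constructor <;> linarith
  · rw [min_eq_right hc]
    rcases le_total (H - h + 1) 0 with he | he
    · rw [max_eq_right he]; constructor <;> linarith
    · rw [max_eq_left he]; constructor <;> linarith
end
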